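/- In the node-and-edge activation model (each of the N nodes is active independently with probability p, and independently each edge of G between two active nodes is retained independently with probability q), with gossip matrix W_1 = I − b L_1 for a real b, the entrywise expectation of W_1² satisfies E[W_1²] = I − 2 b p² q L_G + b² ( p³ q² (L_G² − 2 L_G) + 2 p² q L_G ). -/

import Mathlib

open MeasureTheory ProbabilityTheory Matrix

noncomputable section

/-- The real-valued indicator of a Boolean. -/
def ind (b : Bool) : ℝ := if b then 1 else 0

/-- Adjacency matrix of the random subgraph in the node-and-edge activation
model: edge {i,j} of `G` is kept iff both endpoints are active and the edge
itself is retained. -/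
def A1e {N : ℕ} (G : SimpleGraph (Fin N)) [DecidableRel G.Adj]
    (X : Fin N → Bool) (Y : Fin N → Fin N → Bool) : Matrix (Fin N) (Fin N) ℝ :=
  Matrix.of fun i j => (G.adjMatrix ℝ) i j * ind (X i) * ind (X j) * ind (Y i j)

/-- Diagonal degree matrix of the random subgraph. -/
def D1e {N : ℕ} (G : SimpleGraph (Fin N)) [DecidableRel G.Adj]
    (X : Fin N → Bool) (Y : Fin N → Fin N → Bool) : Matrix (Fin N) (Fin N) ℝ :=
  Matrix.diagonal fun i => ∑ j, A1e G X Y i j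

/-- Laplacian of the random subgraph. -/
def L1e {N : ℕ} (G : SimpleGraph (Fin N)) [DecidableRel G.Adj]
    (X : Fin N → Bool) (Y : Fin N → Fin N → Bool) : Matrix (Fin N) (Fin N) ℝ :=
  D1e G X Y - A1e G X Y

section Aux

variable {N : ℕ} {Ω : Type*} [MeasurableSpace Ω] {μ : Measure Ω} [IsProbabilityMeasure μ]

abbrev Idx (N : ℕ) := Fin N ⊕ {e : Fin N × Fin N // e.1 < e.2}

lemma prod_ind_eq_indicator (Z : Idx N → Ω → Bool) (u : Finset (Idx N)) :
    (fun ω => ∏ k ∈ u, ind (Z k ω))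
      = Set.indicator (⋂ k ∈ u, {ω | Z k ω = true}) (1 : Ω → ℝ) := by
  funext ω
  by_cases h : ∀ k ∈ u, Z k ω = true
  · rw [Set.indicator_of_mem (by simpa using h)]; show _ = (1:ℝ); symm
    exact (Finset.prod_eq_one fun k hk => by simp [ind, h k hk]).symm
  · push_neg at h
    obtain ⟨k, hk, hZ⟩ := h
    rw [Set.indicator_of_notMem (by simp only [Set.mem_iInter]; push_neg; exact ⟨k, hk, by simp [hZ]⟩)]
    exact Finset.prod_eq_zero hk (by simp [ind, hZ])

lemma measurableSet_ZTrue (Z : Idx N → Ω → Bool) (hmeas : ∀ k, Measurable (Z k)) (k : Idx N) :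
    MeasurableSet {ω | Z k ω = true} :=
  (hmeas k) (measurableSet_singleton true)

lemma integral_prod_ind (Z : Idx N → Ω → Bool) (hmeas : ∀ k, Measurable (Z k))
    (hindep : iIndepFun Z μ) (u : Finset (Idx N)) :
    ∫ ω, ∏ k ∈ u, ind (Z k ω) ∂μ = ∏ k ∈ u, (μ {ω | Z k ω = true}).toReal := by
  rw [prod_ind_eq_indicator]
  refine (integral_indicator_one
    (MeasurableSet.biInter u.countable_toSet fun k _ => measurableSet_ZTrue Z hmeas k)).trans ?_
  have : (⋂ b ∈ (↑u : Set (Idx N)), {ω | Z b ω = true}) = ⋂ i ∈ u, {ω | Z i ω = true} := rfl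
  rw [this, measureReal_def, hindep.meas_biInter (S := u) (s := fun k => {ω | Z k ω = true}) (fun k _ => ⟨{true}, trivial, rfl⟩)]
  exact ENNReal.toReal_prod _ _

def ed {N : ℕ} (i j : Fin N) (h : i ≠ j) : {e : Fin N × Fin N // e.1 < e.2} :=
  if hlt : i < j then ⟨(i,j), hlt⟩ else ⟨(j,i), lt_of_le_of_ne (not_lt.mp hlt) h.symm⟩

lemma ed_val {N : ℕ} (i j : Fin N) (h : i ≠ j) :
    (ed i j h).1 = (i, j) ∨ (ed i j h).1 = (j, i) := by
  unfold ed; split <;> simp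

lemma ed_ne {N : ℕ} {c u v : Fin N} (hcu : c ≠ u) (hcv : c ≠ v) (huv : u ≠ v) :
    ed c u hcu ≠ ed c v hcv := by
  intro he
  have h1 := ed_val c u hcu
  have h2 := ed_val c v hcv
  rw [he] at h1
  rcases h1 with h1 | h1 <;> rcases h2 with h2 | h2 <;>
    rw [h1] at h2 <;> simp [Prod.ext_iff] at h2 <;> tauto

lemma ed_Y {N : ℕ} {Ω : Type*} (Y : Fin N → Fin N → Ω → Bool)
    (hYsymm : ∀ i j, Y i j = Y j i) (i j : Fin N) (h : i ≠ j) :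
    Y (ed i j h).1.1 (ed i j h).1.2 = Y i j := by
  rcases ed_val i j h with hv | hv <;> simp [hv, hYsymm j i]

variable (G : SimpleGraph (Fin N)) [DecidableRel G.Adj]
  (p q : ℝ) (X : Fin N → Ω → Bool) (Y : Fin N → Fin N → Ω → Bool)

lemma exp_T1 (hp0 : 0 ≤ p) (hq0 : 0 ≤ q)
    (hYsymm : ∀ i j, Y i j = Y j i)
    (hmeasX : ∀ i, Measurable (X i)) (hmeasY : ∀ i j, Measurable (Y i j))
    (hindep : iIndepFun
      (Sum.elim X (fun e : {e : Fin N × Fin N // e.1 < e.2} => Y e.1.1 e.1.2)) μ)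
    (hbernX : ∀ i, μ {ω | X i ω = true} = ENNReal.ofReal p)
    (hbernY : ∀ i j, G.Adj i j → μ {ω | Y i j ω = true} = ENNReal.ofReal q)
    {i j : Fin N} (hne : i ≠ j) (hadj : G.Adj i j) :
    ∫ ω, ind (X i ω) * ind (X j ω) * ind (Y i j ω) ∂μ = p ^ 2 * q := by
  set Z : Idx N → Ω → Bool := Sum.elim X (fun e => Y e.1.1 e.1.2) with hZ
  have hZm : ∀ k, Measurable (Z k) := by rintro (a | e); exacts [hmeasX a, hmeasY _ _]
  have h1 : ∀ ω, ind (X i ω) * ind (X j ω) * ind (Y i j ω)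
      = ∏ k ∈ ({Sum.inl i, Sum.inl j, Sum.inr (ed i j hne)} : Finset (Idx N)), ind (Z k ω) := by
    intro ω
    rw [Finset.prod_insert (by simp [hne]), Finset.prod_insert (by simp), Finset.prod_singleton]
    simp only [hZ, Sum.elim_inl, Sum.elim_inr]
    rw [ed_Y Y hYsymm i j hne]; ring
  calc ∫ ω, ind (X i ω) * ind (X j ω) * ind (Y i j ω) ∂μ
      = ∫ ω, ∏ k ∈ ({Sum.inl i, Sum.inl j, Sum.inr (ed i j hne)} : Finset (Idx N)), ind (Z k ω) ∂μ := by
        simp only [h1]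
    _ = p ^ 2 * q := by
        rw [integral_prod_ind Z hZm hindep]
        rw [Finset.prod_insert (by simp [hne]), Finset.prod_insert (by simp), Finset.prod_singleton]
        have he : {ω | Z (Sum.inr (ed i j hne)) ω = true} = {ω | Y i j ω = true} := by
          simp only [hZ, Sum.elim_inr]; rw [ed_Y Y hYsymm i j hne]
        simp only [hZ, Sum.elim_inl]
        rw [he, hbernX, hbernX, hbernY i j hadj,
          ENNReal.toReal_ofReal hp0, ENNReal.toReal_ofReal hq0]
        ring

lemma exp_T2 (hp0 : 0 ≤ p) (hq0 : 0 ≤ q)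
    (hYsymm : ∀ i j, Y i j = Y j i)
    (hmeasX : ∀ i, Measurable (X i)) (hmeasY : ∀ i j, Measurable (Y i j))
    (hindep : iIndepFun
      (Sum.elim X (fun e : {e : Fin N × Fin N // e.1 < e.2} => Y e.1.1 e.1.2)) μ)
    (hbernX : ∀ i, μ {ω | X i ω = true} = ENNReal.ofReal p)
    (hbernY : ∀ i j, G.Adj i j → μ {ω | Y i j ω = true} = ENNReal.ofReal q)
    {c u v : Fin N} (hcu : c ≠ u) (hcv : c ≠ v) (huv : u ≠ v)
    (hadj1 : G.Adj c u) (hadj2 : G.Adj c v) :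
    ∫ ω, ind (X c ω) * ind (X u ω) * ind (X v ω) * ind (Y c u ω) * ind (Y c v ω) ∂μ
      = p ^ 3 * q ^ 2 := by
  set Z : Idx N → Ω → Bool := Sum.elim X (fun e => Y e.1.1 e.1.2) with hZ
  have hZm : ∀ k, Measurable (Z k) := by rintro (a | e); exacts [hmeasX a, hmeasY _ _]
  set s : Finset (Idx N) :=
    {Sum.inl c, Sum.inl u, Sum.inl v, Sum.inr (ed c u hcu), Sum.inr (ed c v hcv)} with hs
  have hprod : ∀ (f : Idx N → ℝ), ∏ k ∈ s, f k
      = f (Sum.inl c) * f (Sum.inl u) * f (Sum.inl v)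
        * f (Sum.inr (ed c u hcu)) * f (Sum.inr (ed c v hcv)) := by
    intro f
    rw [hs, Finset.prod_insert (by simp [hcu, hcv]), Finset.prod_insert (by simp [huv]),
      Finset.prod_insert (by simp), Finset.prod_insert (by simp [ed_ne hcu hcv huv]),
      Finset.prod_singleton]
    ring
  have h1 : ∀ ω, ind (X c ω) * ind (X u ω) * ind (X v ω) * ind (Y c u ω) * ind (Y c v ω)
      = ∏ k ∈ s, ind (Z k ω) := by
    intro ω
    rw [hprod]
    simp only [hZ, Sum.elim_inl, Sum.elim_inr]
    rw [ed_Y Y hYsymm c u hcu, ed_Y Y hYsymm c v hcv]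
  calc ∫ ω, ind (X c ω) * ind (X u ω) * ind (X v ω) * ind (Y c u ω) * ind (Y c v ω) ∂μ
      = ∫ ω, ∏ k ∈ s, ind (Z k ω) ∂μ := by simp only [h1]
    _ = p ^ 3 * q ^ 2 := by
        rw [integral_prod_ind Z hZm hindep, hprod]
        have he1 : {ω | Z (Sum.inr (ed c u hcu)) ω = true} = {ω | Y c u ω = true} := by
          simp only [hZ, Sum.elim_inr]; rw [ed_Y Y hYsymm c u hcu]
        have he2 : {ω | Z (Sum.inr (ed c v hcv)) ω = true} = {ω | Y c v ω = true} := by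
          simp only [hZ, Sum.elim_inr]; rw [ed_Y Y hYsymm c v hcv]
        simp only [hZ, Sum.elim_inl]
        rw [he1, he2, hbernX, hbernX, hbernX, hbernY c u hadj1, hbernY c v hadj2,
          ENNReal.toReal_ofReal hp0, ENNReal.toReal_ofReal hq0]
        ring

/-! ### entry functions of the random adjacency matrix -/

def A1f (i j : Fin N) : Ω → ℝ :=
  fun ω => A1e G (fun v => X v ω) (fun a b => Y a b ω) i j

lemma A1f_apply (i j : Fin N) (ω : Ω) :
    A1f G X Y i j ω
      = (G.adjMatrix ℝ) i j * ind (X i ω) * ind (X j ω) * ind (Y i j ω) := rfl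

lemma A1f_symm (hYsymm : ∀ i j, Y i j = Y j i) (i j : Fin N) :
    A1f G X Y i j = A1f G X Y j i := by
  funext ω
  simp only [A1f_apply, SimpleGraph.adjMatrix_apply]
  rw [hYsymm i j]
  simp only [show G.Adj i j ↔ G.Adj j i from G.adj_comm i j]
  ring

lemma meas_ind {g : Ω → Bool} (hg : Measurable g) :
    Measurable (fun ω => ind (g ω)) :=
  (measurable_of_finite ind).comp hg

lemma meas_A1 (hmeasX : ∀ i, Measurable (X i)) (hmeasY : ∀ i j, Measurable (Y i j))
    (i j : Fin N) : Measurable (A1f G X Y i j) := by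
  show Measurable fun ω => (G.adjMatrix ℝ) i j * ind (X i ω) * ind (X j ω) * ind (Y i j ω)
  exact ((measurable_const.mul (meas_ind (hmeasX i))).mul (meas_ind (hmeasX j))).mul
    (meas_ind (hmeasY i j))

lemma abs_A1_le (i j : Fin N) (ω : Ω) : ‖A1f G X Y i j ω‖ ≤ 1 := by
  rw [A1f_apply]
  simp only [SimpleGraph.adjMatrix_apply, ind, Real.norm_eq_abs]
  split_ifs <;> norm_num

lemma integrable_bdd {f : Ω → ℝ} (hm : Measurable f) {C : ℝ} (hb : ∀ ω, ‖f ω‖ ≤ C) :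
    Integrable f μ :=
  Integrable.mono' (integrable_const C) hm.aestronglyMeasurable (ae_of_all μ hb)

lemma integrable_A1 (hmeasX : ∀ i, Measurable (X i)) (hmeasY : ∀ i j, Measurable (Y i j))
    (i j : Fin N) : Integrable (A1f G X Y i j) μ :=
  integrable_bdd (meas_A1 G X Y hmeasX hmeasY i j) (abs_A1_le G X Y i j)

lemma integrable_A1_mul_A1 (hmeasX : ∀ i, Measurable (X i)) (hmeasY : ∀ i j, Measurable (Y i j))
    (i j k l : Fin N) : Integrable (fun ω => A1f G X Y i j ω * A1f G X Y k l ω) μ := by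
  refine integrable_bdd ((meas_A1 G X Y hmeasX hmeasY i j).mul (meas_A1 G X Y hmeasX hmeasY k l))
    (C := 1) fun ω => ?_
  rw [norm_mul]
  calc ‖A1f G X Y i j ω‖ * ‖A1f G X Y k l ω‖ ≤ 1 * 1 :=
        mul_le_mul (abs_A1_le G X Y i j ω) (abs_A1_le G X Y k l ω) (norm_nonneg _) zero_le_one
    _ = 1 := mul_one 1

/-- expectation of a single entry -/
lemma exp_A (hp0 : 0 ≤ p) (hq0 : 0 ≤ q)
    (hYsymm : ∀ i j, Y i j = Y j i)
    (hmeasX : ∀ i, Measurable (X i)) (hmeasY : ∀ i j, Measurable (Y i j))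
    (hindep : iIndepFun
      (Sum.elim X (fun e : {e : Fin N × Fin N // e.1 < e.2} => Y e.1.1 e.1.2)) μ)
    (hbernX : ∀ i, μ {ω | X i ω = true} = ENNReal.ofReal p)
    (hbernY : ∀ i j, G.Adj i j → μ {ω | Y i j ω = true} = ENNReal.ofReal q)
    (i j : Fin N) :
    ∫ ω, A1f G X Y i j ω ∂μ = (G.adjMatrix ℝ) i j * (p ^ 2 * q) := by
  by_cases hadj : G.Adj i j
  · have hpt : ∀ ω, A1f G X Y i j ω = ind (X i ω) * ind (X j ω) * ind (Y i j ω) := by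
      intro ω; rw [A1f_apply]; simp [SimpleGraph.adjMatrix_apply, hadj]
    simp only [hpt]
    rw [exp_T1 G p q X Y hp0 hq0 hYsymm hmeasX hmeasY hindep hbernX hbernY
      (G.ne_of_adj hadj) hadj]
    simp [hadj]
  · have hpt : ∀ ω, A1f G X Y i j ω = 0 := by
      intro ω; rw [A1f_apply]; simp [SimpleGraph.adjMatrix_apply, hadj]
    simp only [hpt, integral_zero]
    simp [hadj]

/-- expectation of the product of two entries sharing the middle vertex. -/
lemma exp_AB (hp0 : 0 ≤ p) (hq0 : 0 ≤ q)
    (hYsymm : ∀ i j, Y i j = Y j i)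
    (hmeasX : ∀ i, Measurable (X i)) (hmeasY : ∀ i j, Measurable (Y i j))
    (hindep : iIndepFun
      (Sum.elim X (fun e : {e : Fin N × Fin N // e.1 < e.2} => Y e.1.1 e.1.2)) μ)
    (hbernX : ∀ i, μ {ω | X i ω = true} = ENNReal.ofReal p)
    (hbernY : ∀ i j, G.Adj i j → μ {ω | Y i j ω = true} = ENNReal.ofReal q)
    (u c v : Fin N) :
    ∫ ω, A1f G X Y u c ω * A1f G X Y c v ω ∂μ
      = (G.adjMatrix ℝ) u c * (G.adjMatrix ℝ) c v * (p ^ 3 * q ^ 2)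
        + (if v = u then (G.adjMatrix ℝ) u c * (p ^ 2 * q - p ^ 3 * q ^ 2) else 0) := by
  by_cases h1 : G.Adj u c
  · by_cases hvu : v = u
    · subst hvu
      have hpt : ∀ ω, A1f G X Y v c ω * A1f G X Y c v ω
          = ind (X v ω) * ind (X c ω) * ind (Y v c ω) := by
        intro ω
        simp only [A1f_apply, SimpleGraph.adjMatrix_apply, if_pos h1,
          if_pos ((G.adj_comm v c).mp h1)]
        rw [hYsymm c v]
        cases X v ω <;> cases X c ω <;> cases Y v c ω <;> simp [ind]
      simp only [hpt]
      rw [exp_T1 G p q X Y hp0 hq0 hYsymm hmeasX hmeasY hindep hbernX hbernY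
        (G.ne_of_adj h1) h1]
      simp [SimpleGraph.adjMatrix_apply, h1, (G.adj_comm v c).mp h1]
    · by_cases h2 : G.Adj c v
      · have hcu : c ≠ u := (G.ne_of_adj h1).symm
        have hcv : c ≠ v := G.ne_of_adj h2
        have huv : u ≠ v := fun h => hvu h.symm
        have hpt : ∀ ω, A1f G X Y u c ω * A1f G X Y c v ω
            = ind (X c ω) * ind (X u ω) * ind (X v ω) * ind (Y c u ω) * ind (Y c v ω) := by
          intro ω
          simp only [A1f_apply, SimpleGraph.adjMatrix_apply, if_pos h1, if_pos h2]
          rw [hYsymm u c]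
          cases X u ω <;> cases X c ω <;> cases X v ω <;> cases Y c u ω <;> cases Y c v ω <;>
            simp [ind]
        simp only [hpt]
        rw [exp_T2 G p q X Y hp0 hq0 hYsymm hmeasX hmeasY hindep hbernX hbernY
          hcu hcv huv ((G.adj_comm u c).mp h1) h2]
        simp only [if_neg hvu, SimpleGraph.adjMatrix_apply, if_pos h1, if_pos h2]
        ring
      · have hpt : ∀ ω, A1f G X Y u c ω * A1f G X Y c v ω = 0 := by
          intro ω
          simp [A1f_apply, SimpleGraph.adjMatrix_apply, h2]
        simp only [hpt]
        simp [SimpleGraph.adjMatrix_apply, h2, hvu]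
  · have hpt : ∀ ω, A1f G X Y u c ω * A1f G X Y c v ω = 0 := by
      intro ω
      simp [A1f_apply, SimpleGraph.adjMatrix_apply, h1]
    simp only [hpt]
    simp [SimpleGraph.adjMatrix_apply, h1]

lemma adj_symm_entry (u v : Fin N) : (G.adjMatrix ℝ) u v = (G.adjMatrix ℝ) v u := by
  simp only [SimpleGraph.adjMatrix_apply]
  simp [G.adj_comm u v]

lemma exp_sum_AA (hp0 : 0 ≤ p) (hq0 : 0 ≤ q)
    (hYsymm : ∀ i j, Y i j = Y j i)
    (hmeasX : ∀ i, Measurable (X i)) (hmeasY : ∀ i j, Measurable (Y i j))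
    (hindep : iIndepFun
      (Sum.elim X (fun e : {e : Fin N × Fin N // e.1 < e.2} => Y e.1.1 e.1.2)) μ)
    (hbernX : ∀ i, μ {ω | X i ω = true} = ENNReal.ofReal p)
    (hbernY : ∀ i j, G.Adj i j → μ {ω | Y i j ω = true} = ENNReal.ofReal q)
    (u v : Fin N) :
    ∫ ω, ∑ k, A1f G X Y u k ω * A1f G X Y k v ω ∂μ
      = (∑ k, (G.adjMatrix ℝ) u k * (G.adjMatrix ℝ) k v) * (p ^ 3 * q ^ 2)
        + (if v = u then (∑ k, (G.adjMatrix ℝ) u k) * (p ^ 2 * q - p ^ 3 * q ^ 2) else 0) := by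
  rw [integral_finset_sum _ (fun k _ => integrable_A1_mul_A1 G X Y hmeasX hmeasY u k k v)]
  rw [Finset.sum_congr rfl (fun k _ => exp_AB G p q X Y hp0 hq0 hYsymm hmeasX hmeasY hindep hbernX hbernY u k v)]
  rw [Finset.sum_add_distrib, ← Finset.sum_mul]
  congr 1
  by_cases h : v = u
  · simp only [if_pos h, ← Finset.sum_mul]
  · simp only [if_neg h, Finset.sum_const_zero]

lemma exp_df_mul_A1 (hp0 : 0 ≤ p) (hq0 : 0 ≤ q)
    (hYsymm : ∀ i j, Y i j = Y j i)
    (hmeasX : ∀ i, Measurable (X i)) (hmeasY : ∀ i j, Measurable (Y i j))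
    (hindep : iIndepFun
      (Sum.elim X (fun e : {e : Fin N × Fin N // e.1 < e.2} => Y e.1.1 e.1.2)) μ)
    (hbernX : ∀ i, μ {ω | X i ω = true} = ENNReal.ofReal p)
    (hbernY : ∀ i j, G.Adj i j → μ {ω | Y i j ω = true} = ENNReal.ofReal q)
    (u v : Fin N) :
    ∫ ω, (∑ m, A1f G X Y u m ω) * A1f G X Y u v ω ∂μ
      = (∑ m, (G.adjMatrix ℝ) u m) * (G.adjMatrix ℝ) u v * (p ^ 3 * q ^ 2)
        + (G.adjMatrix ℝ) u v * (p ^ 2 * q - p ^ 3 * q ^ 2) := by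
  rw [show (fun ω => (∑ m, A1f G X Y u m ω) * A1f G X Y u v ω)
      = (fun ω => ∑ m, A1f G X Y u m ω * A1f G X Y u v ω) from
    funext fun ω => Finset.sum_mul _ _ _]
  rw [integral_finset_sum _ (fun m _ => integrable_A1_mul_A1 G X Y hmeasX hmeasY u m u v)]
  have hterm : ∀ m, ∫ ω, A1f G X Y u m ω * A1f G X Y u v ω ∂μ
      = (G.adjMatrix ℝ) u m * (G.adjMatrix ℝ) u v * (p ^ 3 * q ^ 2)
        + (if v = m then (G.adjMatrix ℝ) u m * (p ^ 2 * q - p ^ 3 * q ^ 2) else 0) := by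
    intro m
    rw [show A1f G X Y u m = A1f G X Y m u from A1f_symm G X Y hYsymm u m]
    rw [exp_AB G p q X Y hp0 hq0 hYsymm hmeasX hmeasY hindep hbernX hbernY m u v]
    rw [adj_symm_entry G m u]
  rw [Finset.sum_congr rfl (fun m _ => hterm m)]
  rw [Finset.sum_add_distrib, Finset.sum_ite_eq Finset.univ v
    (fun m => (G.adjMatrix ℝ) u m * (p ^ 2 * q - p ^ 3 * q ^ 2)),
    if_pos (Finset.mem_univ v)]
  simp only [← Finset.sum_mul]

lemma exp_A1_mul_df (hp0 : 0 ≤ p) (hq0 : 0 ≤ q)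
    (hYsymm : ∀ i j, Y i j = Y j i)
    (hmeasX : ∀ i, Measurable (X i)) (hmeasY : ∀ i j, Measurable (Y i j))
    (hindep : iIndepFun
      (Sum.elim X (fun e : {e : Fin N × Fin N // e.1 < e.2} => Y e.1.1 e.1.2)) μ)
    (hbernX : ∀ i, μ {ω | X i ω = true} = ENNReal.ofReal p)
    (hbernY : ∀ i j, G.Adj i j → μ {ω | Y i j ω = true} = ENNReal.ofReal q)
    (u v : Fin N) :
    ∫ ω, A1f G X Y u v ω * (∑ m, A1f G X Y v m ω) ∂μ
      = (G.adjMatrix ℝ) u v * (∑ m, (G.adjMatrix ℝ) v m) * (p ^ 3 * q ^ 2)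
        + (G.adjMatrix ℝ) u v * (p ^ 2 * q - p ^ 3 * q ^ 2) := by
  rw [show (fun ω => A1f G X Y u v ω * (∑ m, A1f G X Y v m ω))
      = (fun ω => ∑ m, A1f G X Y u v ω * A1f G X Y v m ω) from
    funext fun ω => Finset.mul_sum _ _ _]
  rw [integral_finset_sum _ (fun m _ => integrable_A1_mul_A1 G X Y hmeasX hmeasY u v v m)]
  rw [Finset.sum_congr rfl (fun m _ => exp_AB G p q X Y hp0 hq0 hYsymm hmeasX hmeasY hindep hbernX hbernY u v m)]
  rw [Finset.sum_add_distrib, Finset.sum_ite_eq' Finset.univ u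
    (fun _ => (G.adjMatrix ℝ) u v * (p ^ 2 * q - p ^ 3 * q ^ 2)),
    if_pos (Finset.mem_univ u)]
  simp only [← Finset.sum_mul, ← Finset.mul_sum]

lemma exp_df_mul_df (hp0 : 0 ≤ p) (hq0 : 0 ≤ q)
    (hYsymm : ∀ i j, Y i j = Y j i)
    (hmeasX : ∀ i, Measurable (X i)) (hmeasY : ∀ i j, Measurable (Y i j))
    (hindep : iIndepFun
      (Sum.elim X (fun e : {e : Fin N × Fin N // e.1 < e.2} => Y e.1.1 e.1.2)) μ)
    (hbernX : ∀ i, μ {ω | X i ω = true} = ENNReal.ofReal p)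
    (hbernY : ∀ i j, G.Adj i j → μ {ω | Y i j ω = true} = ENNReal.ofReal q)
    (u : Fin N) :
    ∫ ω, (∑ m, A1f G X Y u m ω) * (∑ n, A1f G X Y u n ω) ∂μ
      = (∑ m, (G.adjMatrix ℝ) u m) * (∑ n, (G.adjMatrix ℝ) u n) * (p ^ 3 * q ^ 2)
        + (∑ m, (G.adjMatrix ℝ) u m) * (p ^ 2 * q - p ^ 3 * q ^ 2) := by
  rw [show (fun ω => (∑ m, A1f G X Y u m ω) * (∑ n, A1f G X Y u n ω))
      = (fun ω => ∑ m, ∑ n, A1f G X Y u m ω * A1f G X Y u n ω) from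
    funext fun ω => Finset.sum_mul_sum _ _ _ _]
  rw [integral_finset_sum _ (fun m _ =>
    integrable_finset_sum _ (fun n _ => integrable_A1_mul_A1 G X Y hmeasX hmeasY u m u n))]
  have hrow : ∀ m, ∫ ω, ∑ n, A1f G X Y u m ω * A1f G X Y u n ω ∂μ
      = (G.adjMatrix ℝ) u m * (∑ n, (G.adjMatrix ℝ) u n) * (p ^ 3 * q ^ 2)
        + (G.adjMatrix ℝ) u m * (p ^ 2 * q - p ^ 3 * q ^ 2) := by
    intro m
    rw [integral_finset_sum _ (fun n _ => integrable_A1_mul_A1 G X Y hmeasX hmeasY u m u n)]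
    have hterm : ∀ n, ∫ ω, A1f G X Y u m ω * A1f G X Y u n ω ∂μ
        = (G.adjMatrix ℝ) u m * (G.adjMatrix ℝ) u n * (p ^ 3 * q ^ 2)
          + (if n = m then (G.adjMatrix ℝ) u m * (p ^ 2 * q - p ^ 3 * q ^ 2) else 0) := by
      intro n
      rw [show A1f G X Y u m = A1f G X Y m u from A1f_symm G X Y hYsymm u m]
      rw [exp_AB G p q X Y hp0 hq0 hYsymm hmeasX hmeasY hindep hbernX hbernY m u n]
      rw [adj_symm_entry G m u]
    rw [Finset.sum_congr rfl (fun n _ => hterm n)]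
    rw [Finset.sum_add_distrib, Finset.sum_ite_eq' Finset.univ m
      (fun _ => (G.adjMatrix ℝ) u m * (p ^ 2 * q - p ^ 3 * q ^ 2)),
      if_pos (Finset.mem_univ m)]
    simp only [← Finset.sum_mul, ← Finset.mul_sum]
  rw [Finset.sum_congr rfl (fun m _ => hrow m)]
  rw [Finset.sum_add_distrib, ← Finset.sum_mul, ← Finset.sum_mul, ← Finset.sum_mul]

lemma integrable_df (hmeasX : ∀ i, Measurable (X i)) (hmeasY : ∀ i j, Measurable (Y i j))
    (u : Fin N) : Integrable (fun ω => ∑ m, A1f G X Y u m ω) μ :=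
  integrable_finset_sum _ (fun m _ => integrable_A1 G X Y hmeasX hmeasY u m)

lemma integrable_df_mul_A1 (hmeasX : ∀ i, Measurable (X i)) (hmeasY : ∀ i j, Measurable (Y i j))
    (u v : Fin N) : Integrable (fun ω => (∑ m, A1f G X Y u m ω) * A1f G X Y u v ω) μ := by
  simp only [Finset.sum_mul]
  exact integrable_finset_sum _ (fun m _ => integrable_A1_mul_A1 G X Y hmeasX hmeasY u m u v)

lemma integrable_A1_mul_df (hmeasX : ∀ i, Measurable (X i)) (hmeasY : ∀ i j, Measurable (Y i j))
    (u v : Fin N) : Integrable (fun ω => A1f G X Y u v ω * (∑ m, A1f G X Y v m ω)) μ := by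
  simp only [Finset.mul_sum]
  exact integrable_finset_sum _ (fun m _ => integrable_A1_mul_A1 G X Y hmeasX hmeasY u v v m)

lemma integrable_df_mul_df (hmeasX : ∀ i, Measurable (X i)) (hmeasY : ∀ i j, Measurable (Y i j))
    (u : Fin N) : Integrable (fun ω => (∑ m, A1f G X Y u m ω) * (∑ n, A1f G X Y u n ω)) μ := by
  simp only [Finset.sum_mul_sum]
  exact integrable_finset_sum _ (fun m _ =>
    integrable_finset_sum _ (fun n _ => integrable_A1_mul_A1 G X Y hmeasX hmeasY u m u n))

lemma integrable_sum_AA (hmeasX : ∀ i, Measurable (X i)) (hmeasY : ∀ i j, Measurable (Y i j))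
    (u v : Fin N) : Integrable (fun ω => ∑ k, A1f G X Y u k ω * A1f G X Y k v ω) μ :=
  integrable_finset_sum _ (fun k _ => integrable_A1_mul_A1 G X Y hmeasX hmeasY u k k v)

lemma deg_eq_sum_adj (u : Fin N) :
    ((G.degree u : ℝ)) = ∑ m, (G.adjMatrix ℝ) u m := by
  simp [SimpleGraph.adjMatrix_apply, Finset.sum_boole, SimpleGraph.degree,
    SimpleGraph.neighborFinset_eq_filter]

lemma lap_entry (u v : Fin N) :
    G.lapMatrix ℝ u v
      = (if u = v then ∑ m, (G.adjMatrix ℝ) u m else 0) - (G.adjMatrix ℝ) u v := by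
  rw [SimpleGraph.lapMatrix, Matrix.sub_apply, SimpleGraph.degMatrix]
  rw [Matrix.diagonal_apply]
  split_ifs with h
  · subst h; rw [deg_eq_sum_adj]
  · rfl

lemma exp_df (hp0 : 0 ≤ p) (hq0 : 0 ≤ q)
    (hYsymm : ∀ i j, Y i j = Y j i)
    (hmeasX : ∀ i, Measurable (X i)) (hmeasY : ∀ i j, Measurable (Y i j))
    (hindep : iIndepFun
      (Sum.elim X (fun e : {e : Fin N × Fin N // e.1 < e.2} => Y e.1.1 e.1.2)) μ)
    (hbernX : ∀ i, μ {ω | X i ω = true} = ENNReal.ofReal p)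
    (hbernY : ∀ i j, G.Adj i j → μ {ω | Y i j ω = true} = ENNReal.ofReal q)
    (u : Fin N) :
    ∫ ω, ∑ m, A1f G X Y u m ω ∂μ = (∑ m, (G.adjMatrix ℝ) u m) * (p ^ 2 * q) := by
  rw [integral_finset_sum _ (fun m _ => integrable_A1 G X Y hmeasX hmeasY u m)]
  rw [Finset.sum_congr rfl (fun m _ => exp_A G p q X Y hp0 hq0 hYsymm hmeasX hmeasY hindep hbernX hbernY u m)]
  rw [← Finset.sum_mul]

lemma lap_eq_diag_sub (G : SimpleGraph (Fin N)) [DecidableRel G.Adj] :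
    G.lapMatrix ℝ
      = Matrix.diagonal (fun u => ∑ m, (G.adjMatrix ℝ) u m) - G.adjMatrix ℝ := by
  ext u v
  rw [lap_entry, Matrix.sub_apply, Matrix.diagonal_apply]

end Aux


theorem stmt12 {N : ℕ} (G : SimpleGraph (Fin N)) [DecidableRel G.Adj]
    {Ω : Type*} [MeasurableSpace Ω] (μ : Measure Ω) [IsProbabilityMeasure μ]
    (p q : ℝ) (hp0 : 0 ≤ p) (hp1 : p ≤ 1) (hq0 : 0 ≤ q) (hq1 : q ≤ 1) (b : ℝ)
    (X : Fin N → Ω → Bool) (Y : Fin N → Fin N → Ω → Bool)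
    (hYsymm : ∀ i j, Y i j = Y j i)
    (hmeasX : ∀ i, Measurable (X i))
    (hmeasY : ∀ i j, Measurable (Y i j))
    -- the node activations and the edge activations (one variable per
    -- unordered pair {i,j} with i < j) are jointly independent
    (hindep : iIndepFun
      (Sum.elim X (fun e : {e : Fin N × Fin N // e.1 < e.2} => Y e.1.1 e.1.2)) μ)
    (hbernX : ∀ i, μ {ω | X i ω = true} = ENNReal.ofReal p)
    (hbernY : ∀ i j, G.Adj i j → μ {ω | Y i j ω = true} = ENNReal.ofReal q)
    (W1 : Ω → Matrix (Fin N) (Fin N) ℝ)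
    (hW1 : ∀ ω, W1 ω = 1 - b • L1e G (fun v => X v ω) (fun i j => Y i j ω)) :
    ∀ i j, ∫ ω, (W1 ω * W1 ω) i j ∂μ
      = ((1 : Matrix (Fin N) (Fin N) ℝ) - (2 * b * p ^ 2 * q) • G.lapMatrix ℝ
          + b ^ 2 • ((p ^ 3 * q ^ 2) • (G.lapMatrix ℝ * G.lapMatrix ℝ - 2 • G.lapMatrix ℝ)
            + (2 * p ^ 2 * q) • G.lapMatrix ℝ)) i j := by
  intro i j
  -- pointwise expansion of the squared gossip matrix entry
  have hpt : ∀ ω : Ω, (W1 ω * W1 ω) i j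
      = (1 : Matrix (Fin N) (Fin N) ℝ) i j
        - 2*b*((if i = j then ∑ m, A1f G X Y i m ω else 0) - A1f G X Y i j ω)
        + b^2*((if i = j then (∑ m, A1f G X Y i m ω) * (∑ n, A1f G X Y i n ω) else 0)
          - (∑ m, A1f G X Y i m ω) * A1f G X Y i j ω
          - A1f G X Y i j ω * (∑ m, A1f G X Y j m ω)
          + ∑ k, A1f G X Y i k ω * A1f G X Y k j ω) := by
    intro ω
    rw [hW1 ω]
    set Xw : Fin N → Bool := fun v => X v ω with hXw
    set Yw : Fin N → Fin N → Bool := fun a c => Y a c ω with hYw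
    have hexp : (1 - b • L1e G Xw Yw) * (1 - b • L1e G Xw Yw)
        = 1 - (2*b) • L1e G Xw Yw + (b^2) • (L1e G Xw Yw * L1e G Xw Yw) := by
      simp only [sub_mul, mul_sub, one_mul, mul_one, smul_mul_assoc, mul_smul_comm,
        smul_smul, pow_two]
      module
    rw [hexp]
    have hMM : L1e G Xw Yw * L1e G Xw Yw
        = D1e G Xw Yw * D1e G Xw Yw - D1e G Xw Yw * A1e G Xw Yw
          - A1e G Xw Yw * D1e G Xw Yw + A1e G Xw Yw * A1e G Xw Yw := by
      rw [L1e]; noncomm_ring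
    rw [Matrix.add_apply, Matrix.sub_apply, Matrix.smul_apply, Matrix.smul_apply, hMM]
    rw [Matrix.add_apply, Matrix.sub_apply, Matrix.sub_apply]
    rw [L1e, Matrix.sub_apply]
    rw [show D1e G Xw Yw = Matrix.diagonal (fun u => ∑ m, A1e G Xw Yw u m) from rfl]
    rw [Matrix.diagonal_mul_diagonal, Matrix.diagonal_mul, Matrix.mul_diagonal,
      Matrix.diagonal_apply, Matrix.diagonal_apply, Matrix.mul_apply]
    have hA : ∀ u v, A1e G Xw Yw u v = A1f G X Y u v ω := fun _ _ => rfl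
    simp only [hA, smul_eq_mul]
  simp only [hpt]
  -- integrable pieces
  have hD1 : Integrable (fun ω => (if i = j then ∑ m, A1f G X Y i m ω else 0)) μ := by
    by_cases h : i = j
    · simp only [if_pos h]; exact integrable_df G X Y hmeasX hmeasY i
    · simp only [if_neg h]; exact integrable_const 0
  have hD2 : Integrable
      (fun ω => (if i = j then (∑ m, A1f G X Y i m ω) * (∑ n, A1f G X Y i n ω) else 0)) μ := by
    by_cases h : i = j
    · simp only [if_pos h]; exact integrable_df_mul_df G X Y hmeasX hmeasY i
    · simp only [if_neg h]; exact integrable_const 0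
  have hP1 : Integrable (fun ω => (∑ m, A1f G X Y i m ω) * A1f G X Y i j ω) μ :=
    integrable_df_mul_A1 G X Y hmeasX hmeasY i j
  have hP2 : Integrable (fun ω => A1f G X Y i j ω * (∑ m, A1f G X Y j m ω)) μ :=
    integrable_A1_mul_df G X Y hmeasX hmeasY i j
  have hS : Integrable (fun ω => ∑ k, A1f G X Y i k ω * A1f G X Y k j ω) μ :=
    integrable_sum_AA G X Y hmeasX hmeasY i j
  have hg1 : Integrable
      (fun ω => (if i = j then ∑ m, A1f G X Y i m ω else 0) - A1f G X Y i j ω) μ :=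
    hD1.sub (integrable_A1 G X Y hmeasX hmeasY i j)
  have hgA : Integrable
      (fun ω => (if i = j then (∑ m, A1f G X Y i m ω) * (∑ n, A1f G X Y i n ω) else 0)
        - (∑ m, A1f G X Y i m ω) * A1f G X Y i j ω) μ := hD2.sub hP1
  have hgB : Integrable
      (fun ω => (if i = j then (∑ m, A1f G X Y i m ω) * (∑ n, A1f G X Y i n ω) else 0)
        - (∑ m, A1f G X Y i m ω) * A1f G X Y i j ω
        - A1f G X Y i j ω * (∑ m, A1f G X Y j m ω)) μ := hgA.sub hP2
  have hg2 : Integrable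
      (fun ω => (if i = j then (∑ m, A1f G X Y i m ω) * (∑ n, A1f G X Y i n ω) else 0)
        - (∑ m, A1f G X Y i m ω) * A1f G X Y i j ω
        - A1f G X Y i j ω * (∑ m, A1f G X Y j m ω)
        + ∑ k, A1f G X Y i k ω * A1f G X Y k j ω) μ := hgB.add hS
  -- expectations of the indicator pieces
  have hdfint : ∫ ω, (if i = j then ∑ m, A1f G X Y i m ω else 0) ∂μ
      = if i = j then (∑ m, (G.adjMatrix ℝ) i m) * (p ^ 2 * q) else 0 := by
    by_cases h : i = j
    · simp only [if_pos h]
      exact exp_df G p q X Y hp0 hq0 hYsymm hmeasX hmeasY hindep hbernX hbernY i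
    · simp only [if_neg h, integral_zero]
  have hdf2int : ∫ ω, (if i = j then (∑ m, A1f G X Y i m ω) * (∑ n, A1f G X Y i n ω) else 0) ∂μ
      = if i = j then (∑ m, (G.adjMatrix ℝ) i m) * (∑ n, (G.adjMatrix ℝ) i n) * (p ^ 3 * q ^ 2)
          + (∑ m, (G.adjMatrix ℝ) i m) * (p ^ 2 * q - p ^ 3 * q ^ 2) else 0 := by
    by_cases h : i = j
    · simp only [if_pos h]
      exact exp_df_mul_df G p q X Y hp0 hq0 hYsymm hmeasX hmeasY hindep hbernX hbernY i
    · simp only [if_neg h, integral_zero]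
  have E1 : ∫ ω, ((if i = j then ∑ m, A1f G X Y i m ω else 0) - A1f G X Y i j ω) ∂μ
      = (if i = j then (∑ m, (G.adjMatrix ℝ) i m) * (p ^ 2 * q) else 0)
        - (G.adjMatrix ℝ) i j * (p ^ 2 * q) := by
    rw [integral_sub hD1 (integrable_A1 G X Y hmeasX hmeasY i j), hdfint,
      exp_A G p q X Y hp0 hq0 hYsymm hmeasX hmeasY hindep hbernX hbernY i j]
  have E2 : ∫ ω, ((if i = j then (∑ m, A1f G X Y i m ω) * (∑ n, A1f G X Y i n ω) else 0)
        - (∑ m, A1f G X Y i m ω) * A1f G X Y i j ω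
        - A1f G X Y i j ω * (∑ m, A1f G X Y j m ω)
        + ∑ k, A1f G X Y i k ω * A1f G X Y k j ω) ∂μ
      = (if i = j then (∑ m, (G.adjMatrix ℝ) i m) * (∑ n, (G.adjMatrix ℝ) i n) * (p ^ 3 * q ^ 2)
          + (∑ m, (G.adjMatrix ℝ) i m) * (p ^ 2 * q - p ^ 3 * q ^ 2) else 0)
        - ((∑ m, (G.adjMatrix ℝ) i m) * (G.adjMatrix ℝ) i j * (p ^ 3 * q ^ 2)
            + (G.adjMatrix ℝ) i j * (p ^ 2 * q - p ^ 3 * q ^ 2))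
        - ((G.adjMatrix ℝ) i j * (∑ m, (G.adjMatrix ℝ) j m) * (p ^ 3 * q ^ 2)
            + (G.adjMatrix ℝ) i j * (p ^ 2 * q - p ^ 3 * q ^ 2))
        + ((∑ k, (G.adjMatrix ℝ) i k * (G.adjMatrix ℝ) k j) * (p ^ 3 * q ^ 2)
            + (if j = i then (∑ k, (G.adjMatrix ℝ) i k) * (p ^ 2 * q - p ^ 3 * q ^ 2) else 0)) := by
    rw [integral_add hgB hS, integral_sub hgA hP2, integral_sub hD2 hP1, hdf2int,
      exp_df_mul_A1 G p q X Y hp0 hq0 hYsymm hmeasX hmeasY hindep hbernX hbernY i j,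
      exp_A1_mul_df G p q X Y hp0 hq0 hYsymm hmeasX hmeasY hindep hbernX hbernY i j,
      exp_sum_AA G p q X Y hp0 hq0 hYsymm hmeasX hmeasY hindep hbernX hbernY i j]
  -- put the integral together
  have hT1 : Integrable (fun ω =>
      2 * b * ((if i = j then ∑ m, A1f G X Y i m ω else 0) - A1f G X Y i j ω)) μ :=
    hg1.const_mul (2*b)
  have hT0 : Integrable (fun ω => (1 : Matrix (Fin N) (Fin N) ℝ) i j
      - 2 * b * ((if i = j then ∑ m, A1f G X Y i m ω else 0) - A1f G X Y i j ω)) μ :=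
    (integrable_const _).sub hT1
  have hT2 : Integrable (fun ω =>
      b ^ 2 * ((if i = j then (∑ m, A1f G X Y i m ω) * (∑ n, A1f G X Y i n ω) else 0)
        - (∑ m, A1f G X Y i m ω) * A1f G X Y i j ω
        - A1f G X Y i j ω * (∑ m, A1f G X Y j m ω)
        + ∑ k, A1f G X Y i k ω * A1f G X Y k j ω)) μ :=
    hg2.const_mul (b^2)
  rw [integral_add hT0 hT2, integral_sub (integrable_const _) hT1,
    integral_const, integral_const_mul, integral_const_mul, E1, E2]
  -- expand the right-hand side entrywise
  have hlap2 : G.lapMatrix ℝ * G.lapMatrix ℝ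
      = Matrix.diagonal (fun u => ∑ m, (G.adjMatrix ℝ) u m)
          * Matrix.diagonal (fun u => ∑ m, (G.adjMatrix ℝ) u m)
        - Matrix.diagonal (fun u => ∑ m, (G.adjMatrix ℝ) u m) * G.adjMatrix ℝ
        - G.adjMatrix ℝ * Matrix.diagonal (fun u => ∑ m, (G.adjMatrix ℝ) u m)
        + G.adjMatrix ℝ * G.adjMatrix ℝ := by
    rw [lap_eq_diag_sub]; noncomm_ring
  have hl2e : (G.lapMatrix ℝ * G.lapMatrix ℝ) i j
      = (if i = j then (∑ m, (G.adjMatrix ℝ) i m) * (∑ m, (G.adjMatrix ℝ) i m) else 0)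
        - (∑ m, (G.adjMatrix ℝ) i m) * (G.adjMatrix ℝ) i j
        - (G.adjMatrix ℝ) i j * (∑ m, (G.adjMatrix ℝ) j m)
        + ∑ k, (G.adjMatrix ℝ) i k * (G.adjMatrix ℝ) k j := by
    rw [hlap2, Matrix.add_apply, Matrix.sub_apply, Matrix.sub_apply,
      Matrix.diagonal_mul_diagonal, Matrix.diagonal_mul, Matrix.mul_diagonal,
      Matrix.diagonal_apply, Matrix.mul_apply]
  simp only [Matrix.add_apply, Matrix.sub_apply, Matrix.smul_apply, hl2e, lap_entry,
    Matrix.one_apply, smul_eq_mul, probReal_univ, measure_univ, ENNReal.toReal_one, one_smul]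
  simp only [nsmul_eq_mul, Nat.cast_ofNat]
  rcases eq_or_ne i j with h | h
  · subst h
    simp only [eq_self_iff_true, if_true]
    ring
  · simp only [if_neg h, if_neg (Ne.symm h)]
    ring
end
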